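/- Let G be a group with a normal subgroup N and quotient G/N ≅ ℤ, both N and G/N infinite, and suppose G is word hyperbolic with finite generating set A. Then N is not a quasiconvex subset of the Cayley graph Γ(G,A). -/
import Mathlib

def evalWord {A G : Type} [Group G] (a : A → G) (w : List A) : G :=
  (w.map a).prod

noncomputable def wlen {A G : Type} [Group G] (a : A → G) (g : G) : ℕ :=
  sInf {n | ∃ w : List A, evalWord a w = g ∧ w.length = n}

noncomputable def wdist {A G : Type} [Group G] (a : A → G) (g h : G) : ℕ :=
  wlen a (g⁻¹ * h)

def FourPointHyperbolic {A G : Type} [Group G] (a : A → G) (δ : ℝ) : Prop :=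
  ∀ x y z w : G, (wdist a x y : ℝ) + wdist a z w ≤
    max ((wdist a x z : ℝ) + wdist a y w) ((wdist a x w : ℝ) + wdist a y z) + 2 * δ

section Aux

variable {A G : Type} [Group G]

theorem evalWord_append (a : A → G) (w₁ w₂ : List A) :
    evalWord a (w₁ ++ w₂) = evalWord a w₁ * evalWord a w₂ := by
  simp [evalWord]

theorem evalWord_cons (a : A → G) (x : A) (t : List A) :
    evalWord a (x :: t) = a x * evalWord a t := by
  simp [evalWord]

theorem wlen_spec (a : A → G) (hgen : ∀ g : G, ∃ w : List A, evalWord a w = g) (g : G) :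
    ∃ w : List A, evalWord a w = g ∧ w.length = wlen a g := by
  obtain ⟨w, hw⟩ := hgen g
  obtain ⟨w', h1, h2⟩ := Nat.sInf_mem (⟨w.length, w, hw, rfl⟩ :
    {n | ∃ w : List A, evalWord a w = g ∧ w.length = n}.Nonempty)
  exact ⟨w', h1, h2⟩

theorem wlen_le (a : A → G) (w : List A) : wlen a (evalWord a w) ≤ w.length :=
  Nat.sInf_le ⟨w, rfl, rfl⟩

theorem wlen_mul (a : A → G) (hgen : ∀ g : G, ∃ w : List A, evalWord a w = g) (g h : G) :
    wlen a (g * h) ≤ wlen a g + wlen a h := by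
  obtain ⟨wg, hg, lg⟩ := wlen_spec a hgen g
  obtain ⟨wh, hh, lh⟩ := wlen_spec a hgen h
  have hgh : evalWord a (wg ++ wh) = g * h := by rw [evalWord_append, hg, hh]
  calc wlen a (g*h) = wlen a (evalWord a (wg ++ wh)) := by rw [hgh]
    _ ≤ (wg ++ wh).length := wlen_le a _
    _ = wlen a g + wlen a h := by rw [List.length_append, lg, lh]

theorem exists_inv_word (a : A → G) (hinv : ∀ x : A, ∃ y : A, a y = (a x)⁻¹) (w : List A) :
    ∃ w' : List A, w'.length = w.length ∧ evalWord a w' = (evalWord a w)⁻¹ := by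
  induction w with
  | nil => exact ⟨[], rfl, by simp [evalWord]⟩
  | cons x t ih =>
    obtain ⟨w', hl, he⟩ := ih
    obtain ⟨y, hy⟩ := hinv x
    refine ⟨w' ++ [y], by simp [hl], ?_⟩
    rw [evalWord_append, he, evalWord_cons]
    simp [evalWord, hy, mul_inv_rev]

theorem wlen_inv (a : A → G) (hinv : ∀ x : A, ∃ y : A, a y = (a x)⁻¹)
    (hgen : ∀ g : G, ∃ w : List A, evalWord a w = g) (g : G) :
    wlen a g⁻¹ = wlen a g := by
  have key : ∀ z : G, wlen a z⁻¹ ≤ wlen a z := by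
    intro z
    obtain ⟨w, hw, hl⟩ := wlen_spec a hgen z
    obtain ⟨w', hl', he⟩ := exists_inv_word a hinv w
    rw [hw] at he
    calc wlen a z⁻¹ = wlen a (evalWord a w') := by rw [he]
      _ ≤ w'.length := wlen_le a _
      _ = wlen a z := by rw [hl', hl]
  have h1 := key g
  have h2 := key g⁻¹
  rw [inv_inv] at h2
  omega

theorem wdist_comm (a : A → G) (hinv : ∀ x : A, ∃ y : A, a y = (a x)⁻¹)
    (hgen : ∀ g : G, ∃ w : List A, evalWord a w = g) (x y : G) :
    wdist a x y = wdist a y x := by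
  unfold wdist
  rw [← wlen_inv a hinv hgen (x⁻¹ * y)]
  congr 1
  group

theorem wdist_triangle (a : A → G) (hgen : ∀ g : G, ∃ w : List A, evalWord a w = g)
    (x y z : G) : wdist a x z ≤ wdist a x y + wdist a y z := by
  unfold wdist
  have h : x⁻¹ * z = (x⁻¹ * y) * (y⁻¹ * z) := by group
  rw [h]
  exact wlen_mul a hgen _ _

theorem geo_prefix (a : A → G) (hgen : ∀ g : G, ∃ w : List A, evalWord a w = g)
    (u v : G) (w : List A) (hw : evalWord a w = u⁻¹ * v)
    (hl : w.length = wlen a (u⁻¹ * v)) (j : ℕ) (hj : j ≤ w.length) :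
    wdist a u (u * evalWord a (w.take j)) = j ∧
    wdist a (u * evalWord a (w.take j)) v = w.length - j := by
  have hsplit : evalWord a (w.take j) * evalWord a (w.drop j) = u⁻¹ * v := by
    rw [← evalWord_append, List.take_append_drop, hw]
  have h1 : wlen a (evalWord a (w.take j)) ≤ j := by
    have := wlen_le a (w.take j)
    rwa [List.length_take, min_eq_left hj] at this
  have h2 : wlen a (evalWord a (w.drop j)) ≤ w.length - j := by
    have := wlen_le a (w.drop j)
    rwa [List.length_drop] at this
  have h3 : wlen a (u⁻¹ * v) ≤ wlen a (evalWord a (w.take j)) + wlen a (evalWord a (w.drop j)) := by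
    rw [← hsplit]
    exact wlen_mul a hgen _ _
  have e1 : wlen a (evalWord a (w.take j)) = j := by omega
  have e2 : wlen a (evalWord a (w.drop j)) = w.length - j := by omega
  constructor
  · show wlen a (u⁻¹ * (u * evalWord a (w.take j))) = j
    rw [inv_mul_cancel_left]
    exact e1
  · show wlen a ((u * evalWord a (w.take j))⁻¹ * v) = w.length - j
    have hq : (u * evalWord a (w.take j))⁻¹ * v = evalWord a (w.drop j) := by
      have : evalWord a (w.drop j) = (evalWord a (w.take j))⁻¹ * (u⁻¹ * v) := by
        rw [← hsplit]; group
      rw [this]; group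
    rw [hq]
    exact e2

end Aux

section Proj

variable {A G : Type} [Group G]

/-- Projection lemma: any point `μ` is within `(Gromov product) + 2δ + 1` of some prefix
point of a geodesic word from `u` to `v`. -/
theorem projection (a : A → G) (hinv : ∀ x : A, ∃ y : A, a y = (a x)⁻¹)
    (hgen : ∀ g : G, ∃ w : List A, evalWord a w = g)
    (δ : ℝ) (hhyp : FourPointHyperbolic a δ)
    (u v μ : G) (w : List A) (hw : evalWord a w = u⁻¹ * v)
    (hl : w.length = wlen a (u⁻¹ * v)) :
    ∃ j ≤ w.length, (wdist a μ (u * evalWord a (w.take j)) : ℝ) ≤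
      ((wdist a μ u : ℝ) + (wdist a μ v : ℝ) - (w.length : ℝ)) / 2 + 2 * δ + 1 := by
  have hduv : wdist a u v = w.length := hl.symm
  have t1 : wdist a μ v ≤ wdist a μ u + w.length := by
    have := wdist_triangle a hgen μ u v
    omega
  have t2 : wdist a μ u ≤ wdist a μ v + w.length := by
    have h := wdist_triangle a hgen μ v u
    have hc := wdist_comm a hinv hgen u v
    omega
  set du := wdist a μ u with hdu
  set dv := wdist a μ v with hdv
  set j := (du + w.length - dv) / 2 with hjdef
  have hj : j ≤ w.length := by omega
  obtain ⟨e1, e2⟩ := geo_prefix a hgen u v w hw hl j hj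
  set q := u * evalWord a (w.take j) with hq
  have h4 := hhyp μ q u v
  have c1 : wdist a q u = j := by rw [wdist_comm a hinv hgen]; exact e1
  refine ⟨j, hj, ?_⟩
  -- convert to real arithmetic
  have r1 : (wdist a q u : ℝ) = (j : ℕ) := by exact_mod_cast c1
  have r2 : (wdist a q v : ℝ) = (w.length : ℝ) - j := by
    rw [e2]; rw [Nat.cast_sub hj]
  have r3 : (wdist a u v : ℝ) = (w.length : ℝ) := by exact_mod_cast hduv
  have hj1 : (2 : ℝ) * j ≤ (du : ℝ) + w.length - dv := by
    have : 2 * j ≤ du + w.length - dv := by omega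
    have h' : (du : ℕ) + w.length ≥ dv := by omega
    exact_mod_cast this
  have hj2 : (du : ℝ) + w.length - dv ≤ 2 * j + 1 := by
    have : du + w.length - dv ≤ 2 * j + 1 := by omega
    have h' : (du : ℕ) + w.length ≥ dv := by omega
    have := (Nat.cast_le (α := ℝ)).mpr this
    push_cast [Nat.cast_sub h'] at this ⊢
    linarith
  rw [r1, r2, r3] at h4
  rcases le_total ((wdist a μ u : ℝ) + ((w.length : ℝ) - j)) ((wdist a μ v : ℝ) + j) with hc | hc
  · rw [max_eq_right hc] at h4
    rw [← hdu, ← hdv] at *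
    linarith
  · rw [max_eq_left hc] at h4
    rw [← hdu, ← hdv] at *
    linarith

/-- Slimness from the four-point condition: a prefix point on side `[u,v]` is within
`3δ+1` of a prefix point of side `[v,w]` or of side `[u,w]`. -/
theorem slim (a : A → G) (hinv : ∀ x : A, ∃ y : A, a y = (a x)⁻¹)
    (hgen : ∀ g : G, ∃ w : List A, evalWord a w = g)
    (δ : ℝ) (hhyp : FourPointHyperbolic a δ)
    (u v w : G) (wuv wvw wuw : List A)
    (huv : evalWord a wuv = u⁻¹ * v) (luv : wuv.length = wlen a (u⁻¹ * v))
    (hvw : evalWord a wvw = v⁻¹ * w) (lvw : wvw.length = wlen a (v⁻¹ * w))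
    (huw : evalWord a wuw = u⁻¹ * w) (luw : wuw.length = wlen a (u⁻¹ * w))
    (i : ℕ) (hi : i ≤ wuv.length) :
    (∃ j ≤ wvw.length, (wdist a (u * evalWord a (wuv.take i)) (v * evalWord a (wvw.take j)) : ℝ)
        ≤ 3 * δ + 1) ∨
    (∃ j ≤ wuw.length, (wdist a (u * evalWord a (wuv.take i)) (u * evalWord a (wuw.take j)) : ℝ)
        ≤ 3 * δ + 1) := by
  obtain ⟨e1, e2⟩ := geo_prefix a hgen u v wuv huv luv i hi
  set μ := u * evalWord a (wuv.take i) with hμ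
  have h4 := hhyp u v μ w
  -- real facts
  have A1 : (wdist a u μ : ℝ) = i := by exact_mod_cast e1
  have A2 : (wdist a μ v : ℝ) = (wuv.length : ℝ) - i := by
    rw [e2, Nat.cast_sub hi]
  have A3 : (wdist a u v : ℝ) = (wuv.length : ℝ) := by
    have : wdist a u v = wuv.length := luv.symm
    exact_mod_cast this
  have A4 : (wdist a v μ : ℝ) = (wdist a μ v : ℝ) := by
    have := wdist_comm a hinv hgen v μ
    exact_mod_cast this
  have A5 : (wdist a μ u : ℝ) = (wdist a u μ : ℝ) := by
    have := wdist_comm a hinv hgen μ u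
    exact_mod_cast this
  have A6 : (wvw.length : ℝ) = (wdist a v w : ℝ) := by
    have : wdist a v w = wvw.length := lvw.symm
    exact_mod_cast this.symm
  have A7 : (wuw.length : ℝ) = (wdist a u w : ℝ) := by
    have : wdist a u w = wuw.length := luw.symm
    exact_mod_cast this.symm
  rcases le_total ((wdist a u μ : ℝ) + wdist a v w) ((wdist a u w : ℝ) + wdist a v μ) with hc | hc
  · -- max is right: Gromov product (u|w)_μ ≤ δ, project onto [u,w]
    rw [max_eq_right hc] at h4
    right
    obtain ⟨j, hj, hb⟩ := projection a hinv hgen δ hhyp u w μ wuw huw luw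
    exact ⟨j, hj, hb.trans (by rw [A7] at *; linarith)⟩
  · rw [max_eq_left hc] at h4
    left
    obtain ⟨j, hj, hb⟩ := projection a hinv hgen δ hhyp v w μ wvw hvw lvw
    exact ⟨j, hj, hb.trans (by rw [A6] at *; linarith)⟩

end Proj

section Bound

variable {A G : Type} [Group G]

theorem abs_sum_bound (a : A → G) (f : G →* Multiplicative ℤ) (C : ℕ)
    (hC : ∀ x : A, |Multiplicative.toAdd (f (a x))| ≤ (C : ℤ)) :
    ∀ w : List A, |Multiplicative.toAdd (f (evalWord a w))| ≤ (C : ℤ) * w.length := by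
  intro w
  induction w with
  | nil => simp [evalWord]
  | cons x t ih =>
    rw [evalWord_cons, map_mul, toAdd_mul]
    calc |Multiplicative.toAdd (f (a x)) + Multiplicative.toAdd (f (evalWord a t))|
        ≤ |Multiplicative.toAdd (f (a x))| + |Multiplicative.toAdd (f (evalWord a t))| :=
          abs_add_le _ _
      _ ≤ (C : ℤ) + (C : ℤ) * t.length := add_le_add (hC x) ih
      _ = (C : ℤ) * ((x :: t).length : ℤ) := by
          rw [List.length_cons]; push_cast; ring
      _ = (C : ℤ) * ((x :: t).length) := by norm_cast

end Bound

/-- An infinite normal subgroup `N` of a word hyperbolic group `G` with `G/N ≅ ℤ` is not a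
quasiconvex subset of the Cayley graph: no `ε`-neighborhood of `N` contains all geodesics
between points of `N`. -/
theorem infinite_normal_kernel_not_quasiconvex
    {A G : Type} [Fintype A] [Group G] (a : A → G)
    (hinv : ∀ x : A, ∃ y : A, a y = (a x)⁻¹)
    (hgen : ∀ g : G, ∃ w : List A, evalWord a w = g)
    (δ : ℝ) (hδ : 0 ≤ δ) (hhyp : FourPointHyperbolic a δ)
    (f : G →* Multiplicative ℤ) (hf : Function.Surjective f)
    (N : Subgroup G) (hN : N = f.ker) (hNinf : Infinite N) :
    ¬ ∃ ε : ℝ, 0 < ε ∧ ∀ g ∈ N, ∀ h ∈ N, ∀ w : List A,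
        evalWord a w = g⁻¹ * h → w.length = wlen a (g⁻¹ * h) →
        ∀ p : List A, p <+: w →
          ∃ u : List A, (u.length : ℝ) ≤ ε ∧ g * evalWord a p * evalWord a u ∈ N := by
  rintro ⟨ε, hε, hQ⟩
  classical
  -- membership in N is vanishing of the additive height
  have φ_mem : ∀ x : G, x ∈ N → Multiplicative.toAdd (f x) = 0 := by
    intro x hx
    rw [hN, MonoidHom.mem_ker] at hx
    rw [hx]; rfl
  have φ_mem' : ∀ x : G, Multiplicative.toAdd (f x) = 0 → x ∈ N := by
    intro x hx
    rw [hN, MonoidHom.mem_ker]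
    have : f x = Multiplicative.ofAdd 0 := by
      rw [← hx]; rfl
    simpa using this
  -- bound on generators
  set C : ℕ := Finset.univ.sup (fun x : A => (Multiplicative.toAdd (f (a x))).natAbs) + 1
    with hCdef
  have hC : ∀ x : A, |Multiplicative.toAdd (f (a x))| ≤ (C : ℤ) := by
    intro x
    have h1 : (Multiplicative.toAdd (f (a x))).natAbs ≤
        Finset.univ.sup (fun x : A => (Multiplicative.toAdd (f (a x))).natAbs) :=
      Finset.le_sup (f := fun x : A => (Multiplicative.toAdd (f (a x))).natAbs)
        (Finset.mem_univ x)
    have h2 : (Multiplicative.toAdd (f (a x))).natAbs ≤ C := by omega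
    rw [Int.abs_eq_natAbs]
    exact_mod_cast h2
  have hC0 : (0 : ℝ) ≤ (C : ℝ) := by positivity
  have hword := abs_sum_bound a f C hC
  -- Lipschitz property of the height along the word metric (real version)
  have hdistR : ∀ p q : G,
      |((Multiplicative.toAdd (f q) : ℤ) : ℝ) - ((Multiplicative.toAdd (f p) : ℤ) : ℝ)|
        ≤ (C : ℝ) * (wdist a p q : ℝ) := by
    intro p q
    obtain ⟨w, hw, hl⟩ := wlen_spec a hgen (p⁻¹ * q)
    have h1 := hword w
    rw [hw] at h1
    have h2 : Multiplicative.toAdd (f (p⁻¹ * q))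
        = Multiplicative.toAdd (f q) - Multiplicative.toAdd (f p) := by
      rw [map_mul, map_inv, toAdd_mul, toAdd_inv]; ring
    rw [h2] at h1
    have h3 : w.length = wdist a p q := hl
    rw [h3] at h1
    exact_mod_cast h1
  -- quasiconvexity bounds heights of prefixes of geodesics between points of N
  have hpre : ∀ g ∈ N, ∀ h ∈ N, ∀ w : List A, evalWord a w = g⁻¹ * h →
      w.length = wlen a (g⁻¹ * h) → ∀ j : ℕ,
      |((Multiplicative.toAdd (f (g * evalWord a (w.take j))) : ℤ) : ℝ)| ≤ (C : ℝ) * ε := by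
    intro g hg h hh w hw hl j
    obtain ⟨u, hu, humem⟩ := hQ g hg h hh w hw hl (w.take j) (List.take_prefix j w)
    have h0 : Multiplicative.toAdd (f (g * evalWord a (w.take j) * evalWord a u)) = 0 :=
      φ_mem _ humem
    rw [map_mul, toAdd_mul] at h0
    have h1 : |Multiplicative.toAdd (f (evalWord a u))| ≤ (C : ℤ) * u.length := hword u
    have h2 : Multiplicative.toAdd (f (g * evalWord a (w.take j)))
        = - Multiplicative.toAdd (f (evalWord a u)) := by omega
    rw [h2]
    have h3 : |((- Multiplicative.toAdd (f (evalWord a u)) : ℤ) : ℝ)|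
        = |((Multiplicative.toAdd (f (evalWord a u)) : ℤ) : ℝ)| := by
      push_cast; rw [abs_neg]
    rw [h3]
    have h4 : |((Multiplicative.toAdd (f (evalWord a u)) : ℤ) : ℝ)| ≤ (C : ℝ) * u.length := by
      exact_mod_cast h1
    calc _ ≤ (C : ℝ) * u.length := h4
      _ ≤ (C : ℝ) * ε := mul_le_mul_of_nonneg_left hu hC0
  -- an element of height one
  obtain ⟨t, ht⟩ := hf (Multiplicative.ofAdd 1)
  -- choose m large
  set m : ℕ := ⌈2 * (C : ℝ) * ε + 2 * ((C : ℝ) * (3 * δ + 1))⌉₊ + 1 with hmdef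
  have hm : (m : ℝ) > 2 * (C : ℝ) * ε + 2 * ((C : ℝ) * (3 * δ + 1)) := by
    have h1 := Nat.le_ceil (2 * (C : ℝ) * ε + 2 * ((C : ℝ) * (3 * δ + 1)))
    have h2 : (m : ℝ) = (⌈2 * (C : ℝ) * ε + 2 * ((C : ℝ) * (3 * δ + 1))⌉₊ : ℝ) + 1 := by
      rw [hmdef]; push_cast; ring
    linarith
  set g : G := t ^ m with hgdef
  have hφg : Multiplicative.toAdd (f g) = (m : ℤ) := by
    rw [hgdef, map_pow, ht]
    simp
  set Lg : ℕ := wlen a g with hLgdef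
  -- find a long element of N
  have hbig : ∃ h ∈ N, 2 * Lg + 2 * (⌈6 * δ⌉₊) + 21 ≤ wlen a h := by
    by_contra hcon
    push_neg at hcon
    set R : ℕ := 2 * Lg + 2 * (⌈6 * δ⌉₊) + 21 with hRdef
    have hfin : {w : List A | w.length ≤ R}.Finite := List.finite_length_le A R
    have himg : (N : Set G) ⊆ (evalWord a) '' {w : List A | w.length ≤ R} := by
      intro n hn
      obtain ⟨w, hw, hl⟩ := wlen_spec a hgen n
      refine ⟨w, ?_, hw⟩
      have := hcon n hn
      simp only [Set.mem_setOf_eq]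
      omega
    have hNfin : (N : Set G).Finite := (hfin.image _).subset himg
    have := hNfin.to_subtype
    exact absurd hNinf (by exact not_infinite_iff_finite.mpr this)
  obtain ⟨h, hhN, hH⟩ := hbig
  set H : ℕ := wlen a h with hHdef
  set i0 : ℕ := H / 2 with hi0def
  -- geodesic words
  obtain ⟨wh, whev, whlen⟩ := wlen_spec a hgen h
  obtain ⟨w2, w2ev, w2len⟩ := wlen_spec a hgen ((g * h)⁻¹ * 1)
  obtain ⟨w3, w3ev, w3len⟩ := wlen_spec a hgen (g⁻¹ * 1)
  have hyN : g * h * g⁻¹ ∈ N := by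
    apply φ_mem'
    have hfy : f (g * h * g⁻¹) = f h := by
      rw [map_mul, map_mul, map_inv]
      exact mul_inv_cancel_comm (f g) (f h)
    rw [hfy]
    exact φ_mem h hhN
  obtain ⟨wy, wyev, wylen⟩ := wlen_spec a hgen ((1 : G)⁻¹ * (g * h * g⁻¹))
  -- length facts
  have hw3Lg : w3.length = Lg := by
    rw [w3len, mul_one, wlen_inv a hinv hgen]
  have hwhH : wh.length = H := whlen
  have hi0le : i0 ≤ wh.length := by rw [hwhH]; omega
  have hi0big : Lg + ⌈6 * δ⌉₊ + 10 ≤ i0 := by omega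
  have hi0big2 : Lg + ⌈6 * δ⌉₊ + 10 ≤ H - i0 := by omega
  have hceil : (6 : ℝ) * δ ≤ (⌈6 * δ⌉₊ : ℝ) := Nat.le_ceil _
  -- words in the shape needed for the triangles
  have whev' : evalWord a wh = g⁻¹ * (g * h) := by rw [whev]; group
  have whlen' : wh.length = wlen a (g⁻¹ * (g * h)) := by
    rw [whlen]; congr 1; group
  have w3ev2 : evalWord a w3 = (g * h)⁻¹ * (g * h * g⁻¹) := by
    rw [w3ev]; group
  have w3len2 : w3.length = wlen a ((g * h)⁻¹ * (g * h * g⁻¹)) := by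
    rw [w3len]; congr 1; group
  -- μ := g * evalWord a (wh.take i0) is the midpoint of the translated geodesic of h
  obtain ⟨eg1, eg2⟩ := geo_prefix a hgen g (g * h) wh whev' whlen' i0 hi0le
  -- first triangle : (g, g*h, 1)
  have hsl1 := slim a hinv hgen δ hhyp g (g * h) 1 wh w2 w3 whev' whlen' w2ev w2len w3ev w3len
    i0 hi0le
  rcases hsl1 with ⟨j1, hj1, hd1⟩ | ⟨j1, hj1, hd1⟩
  swap
  · -- impossible: μ is too far from the side [g, 1]
    exfalso
    have hq : wdist a g (g * evalWord a (w3.take j1)) = j1 :=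
      (geo_prefix a hgen g 1 w3 w3ev w3len j1 hj1).1
    have htri : wdist a g (g * evalWord a (wh.take i0)) ≤
        wdist a g (g * evalWord a (w3.take j1)) +
        wdist a (g * evalWord a (w3.take j1)) (g * evalWord a (wh.take i0)) :=
      wdist_triangle a hgen _ _ _
    have hcm : wdist a (g * evalWord a (w3.take j1)) (g * evalWord a (wh.take i0))
        = wdist a (g * evalWord a (wh.take i0)) (g * evalWord a (w3.take j1)) :=
      wdist_comm a hinv hgen _ _
    have hj1' : j1 ≤ Lg := by omega
    have h1 : (i0 : ℝ) ≤ (j1 : ℝ) +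
        (wdist a (g * evalWord a (wh.take i0)) (g * evalWord a (w3.take j1)) : ℝ) := by
      have hnat : i0 ≤ j1 +
          wdist a (g * evalWord a (wh.take i0)) (g * evalWord a (w3.take j1)) := by omega
      exact_mod_cast hnat
    have h2 : (Lg : ℝ) + (⌈6 * δ⌉₊ : ℝ) + 10 ≤ (i0 : ℝ) := by exact_mod_cast hi0big
    have h3 : (j1 : ℝ) ≤ (Lg : ℝ) := by exact_mod_cast hj1'
    linarith
  -- so q1 := (g*h) * evalWord a (w2.take j1) is 3δ+1-close to μ
  -- second triangle : (g*h, 1, g*h*g⁻¹)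
  have hsl2 := slim a hinv hgen δ hhyp (g * h) 1 (g * h * g⁻¹) w2 wy w3
    w2ev w2len wyev wylen w3ev2 w3len2 j1 hj1
  rcases hsl2 with ⟨j2, hj2, hd2⟩ | ⟨j2, hj2, hd2⟩
  swap
  · -- impossible: μ is too far from the side [g*h, g*h*g⁻¹]
    exfalso
    have hq : wdist a (g * h) ((g * h) * evalWord a (w3.take j2)) = j2 :=
      (geo_prefix a hgen (g * h) (g * h * g⁻¹) w3 w3ev2 w3len2 j2 hj2).1
    have htri : wdist a (g * evalWord a (wh.take i0)) (g * h) ≤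
        wdist a (g * evalWord a (wh.take i0)) ((g * h) * evalWord a (w3.take j2)) +
        wdist a ((g * h) * evalWord a (w3.take j2)) (g * h) :=
      wdist_triangle a hgen _ _ _
    have htri2 : wdist a (g * evalWord a (wh.take i0)) ((g * h) * evalWord a (w3.take j2)) ≤
        wdist a (g * evalWord a (wh.take i0)) ((g * h) * evalWord a (w2.take j1)) +
        wdist a ((g * h) * evalWord a (w2.take j1)) ((g * h) * evalWord a (w3.take j2)) :=
      wdist_triangle a hgen _ _ _
    have hcm : wdist a ((g * h) * evalWord a (w3.take j2)) (g * h)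
        = wdist a (g * h) ((g * h) * evalWord a (w3.take j2)) :=
      wdist_comm a hinv hgen _ _
    have hj2' : j2 ≤ Lg := by omega
    have hle : i0 ≤ H := by omega
    have hside : wdist a (g * evalWord a (wh.take i0)) (g * h) = H - i0 := by
      rw [eg2, hwhH]
    have h1 : ((H : ℝ) - (i0 : ℝ)) ≤
        (wdist a (g * evalWord a (wh.take i0)) ((g * h) * evalWord a (w2.take j1)) : ℝ) +
        (wdist a ((g * h) * evalWord a (w2.take j1)) ((g * h) * evalWord a (w3.take j2)) : ℝ) +
        (j2 : ℝ) := by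
      have hnat : H - i0 ≤
          wdist a (g * evalWord a (wh.take i0)) ((g * h) * evalWord a (w2.take j1)) +
          wdist a ((g * h) * evalWord a (w2.take j1)) ((g * h) * evalWord a (w3.take j2)) +
          j2 := by omega
      have := (Nat.cast_le (α := ℝ)).mpr hnat
      rw [Nat.cast_sub hle] at this
      push_cast at this ⊢
      linarith
    have h2 : (Lg : ℝ) + (⌈6 * δ⌉₊ : ℝ) + 10 ≤ (H : ℝ) - (i0 : ℝ) := by
      have := (Nat.cast_le (α := ℝ)).mpr hi0big2
      rw [Nat.cast_sub hle] at this
      push_cast at this ⊢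
      linarith
    have h3 : (j2 : ℝ) ≤ (Lg : ℝ) := by exact_mod_cast hj2'
    linarith
  -- q2 := 1 * evalWord a (wy.take j2) lies on a geodesic from 1 to g*h*g⁻¹
  -- height estimates
  have hμh : Multiplicative.toAdd (f (g * evalWord a (wh.take i0)))
      = (m : ℤ) + Multiplicative.toAdd (f (evalWord a (wh.take i0))) := by
    rw [map_mul, toAdd_mul, hφg]
  have hone : (1 : G) ∈ N := one_mem N
  have hbase : |((Multiplicative.toAdd (f ((1 : G) * evalWord a (wh.take i0))) : ℤ) : ℝ)|
      ≤ (C : ℝ) * ε := by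
    refine hpre 1 hone h hhN wh ?_ ?_ i0
    · rw [whev]; group
    · rw [whlen]; congr 1; group
  rw [one_mul] at hbase
  have hq2bound : |((Multiplicative.toAdd (f ((1 : G) * evalWord a (wy.take j2))) : ℤ) : ℝ)|
      ≤ (C : ℝ) * ε :=
    hpre 1 hone (g * h * g⁻¹) hyN wy wyev wylen j2
  have hlip1 := hdistR (g * evalWord a (wh.take i0)) ((g * h) * evalWord a (w2.take j1))
  have hlip2 := hdistR ((g * h) * evalWord a (w2.take j1)) ((1 : G) * evalWord a (wy.take j2))
  have hb1 : (C : ℝ) * (wdist a (g * evalWord a (wh.take i0))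
        ((g * h) * evalWord a (w2.take j1)) : ℝ) ≤ (C : ℝ) * (3 * δ + 1) :=
    mul_le_mul_of_nonneg_left hd1 hC0
  have hb2 : (C : ℝ) * (wdist a ((g * h) * evalWord a (w2.take j1))
        ((1 : G) * evalWord a (wy.take j2)) : ℝ) ≤ (C : ℝ) * (3 * δ + 1) :=
    mul_le_mul_of_nonneg_left hd2 hC0
  -- assemble the contradiction
  have hμR : ((Multiplicative.toAdd (f (g * evalWord a (wh.take i0))) : ℤ) : ℝ)
      = (m : ℝ) + ((Multiplicative.toAdd (f (evalWord a (wh.take i0))) : ℤ) : ℝ) := by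
    exact_mod_cast congrArg (fun z : ℤ => (z : ℝ)) hμh
  rcases abs_le.mp hbase with ⟨hb3, hb4⟩
  rcases abs_le.mp hq2bound with ⟨hb5, hb6⟩
  rcases abs_le.mp hlip1 with ⟨hb7, hb8⟩
  rcases abs_le.mp hlip2 with ⟨hb9, hb10⟩
  linarith
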